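/- Let q be a prime power and let g be an anisotropic quadratic form on F_q² (i.e., g(w) = 0 implies w = 0). Define the quadratic form Q on F_q⁴ by Q(x₀,x₁,x₂,x₃) = x₀x₁ + g(x₂,x₃). Then the projective zero set {[v] : v ∈ F_q⁴, v ≠ 0, Q(v) = 0} is a (q²+1)-cap of PG(3,q): it has exactly q² + 1 points, no three of which are collinear. -/

import Mathlib

section Aux
variable {F : Type} [Field F]

/-- The quadric `Q(v) = v₀v₁ + g(v₂,v₃)` as a plain function. -/
private def Qf (g : QuadraticForm F (Fin 2 → F)) (v : Fin 4 → F) : F :=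
  v 0 * v 1 + g ![v 2, v 3]

private lemma tail_comb (s t : F) (u w : Fin 4 → F) :
    ![(s • u + t • w) 2, (s • u + t • w) 3] = s • ![u 2, u 3] + t • ![w 2, w 3] := by
  funext i
  fin_cases i <;> simp

/-- Expansion of `Qf` on a linear combination. -/
private lemma Qf_comb (g : QuadraticForm F (Fin 2 → F)) (s t : F) (u w : Fin 4 → F) :
    Qf g (s • u + t • w) = s * s * Qf g u + t * t * Qf g w +
      s * t * (u 0 * w 1 + u 1 * w 0 + QuadraticMap.polar g ![u 2, u 3] ![w 2, w 3]) := by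
  unfold Qf
  rw [tail_comb, QuadraticMap.map_add g, QuadraticMap.map_smul, QuadraticMap.map_smul,
    QuadraticMap.polar_smul_left, QuadraticMap.polar_smul_right]
  simp only [Pi.add_apply, Pi.smul_apply, smul_eq_mul]
  ring

end Aux

section Aux2
variable {F : Type} [Field F]

/-- If `Qf g` vanishes on the span of two vectors and `g` is anisotropic,
the two vectors are dependent. -/
private lemma no_plane (g : QuadraticForm F (Fin 2 → F)) (hg : ∀ w, g w = 0 → w = 0)
    (u w : Fin 4 → F)
    (hind : ∀ s t : F, s • u + t • w = 0 → s = 0 ∧ t = 0)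
    (hall : ∀ s t : F, Qf g (s • u + t • w) = 0) : False := by
  -- find a nonzero vector in the span whose `i`-th coordinate vanishes
  have key : ∀ i : Fin 4, ∃ s t : F, ¬(s = 0 ∧ t = 0) ∧ s * u i + t * w i = 0 := by
    intro i
    by_cases hu : u i = 0
    · exact ⟨1, 0, by simp, by simp [hu]⟩
    · exact ⟨w i, -u i, fun h => hu (by simpa using h.2), by ring⟩
  -- coordinate 0 : produce a multiple of e₁ in the span
  obtain ⟨s, t, hst, h0⟩ := key 0
  set v : Fin 4 → F := s • u + t • w with hvdef
  have hv0 : v 0 = 0 := by simpa [hvdef] using h0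
  have hQv : Qf g v = 0 := hall s t
  have hgz : g ![v 2, v 3] = 0 := by
    have : v 0 * v 1 + g ![v 2, v 3] = 0 := hQv
    rw [hv0, zero_mul, zero_add] at this; exact this
  have h23 : v 2 = 0 ∧ v 3 = 0 := by
    have h := hg _ hgz
    exact ⟨by simpa using congrFun h 0, by simpa using congrFun h 1⟩
  have hv1 : v 1 ≠ 0 := by
    intro h1
    apply hst
    apply hind s t
    show v = 0
    funext i
    fin_cases i <;> simp only [Pi.zero_apply]
    exacts [hv0, h1, h23.1, h23.2]
  -- coordinate 1 : produce a multiple of e₀ in the span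
  obtain ⟨s', t', hst', h1'⟩ := key 1
  set v' : Fin 4 → F := s' • u + t' • w with hv'def
  have hv'1 : v' 1 = 0 := by simpa [hv'def] using h1'
  have hQv' : Qf g v' = 0 := hall s' t'
  have hgz' : g ![v' 2, v' 3] = 0 := by
    have : v' 0 * v' 1 + g ![v' 2, v' 3] = 0 := hQv'
    rw [hv'1, mul_zero, zero_add] at this; exact this
  have h23' : v' 2 = 0 ∧ v' 3 = 0 := by
    have h := hg _ hgz'
    exact ⟨by simpa using congrFun h 0, by simpa using congrFun h 1⟩
  have hv'0 : v' 0 ≠ 0 := by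
    intro h1
    apply hst'
    apply hind s' t'
    show v' = 0
    funext i
    fin_cases i <;> simp only [Pi.zero_apply]
    exacts [h1, hv'1, h23'.1, h23'.2]
  -- now `(v' 0)⁻¹ • v' + (v 1)⁻¹ • v` is in the span and has `Qf`-value 1
  have hz := hall ((v' 0)⁻¹ * s' + (v 1)⁻¹ * s) ((v' 0)⁻¹ * t' + (v 1)⁻¹ * t)
  have hcomb : ((v' 0)⁻¹ * s' + (v 1)⁻¹ * s) • u + ((v' 0)⁻¹ * t' + (v 1)⁻¹ * t) • w
      = (v' 0)⁻¹ • v' + (v 1)⁻¹ • v := by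
    rw [hvdef, hv'def]; module
  rw [hcomb] at hz
  have e2 : ((v' 0)⁻¹ • v' + (v 1)⁻¹ • v) 2 = 0 := by
    simp [h23.1, h23'.1]
  have e3 : ((v' 0)⁻¹ • v' + (v 1)⁻¹ • v) 3 = 0 := by
    simp [h23.2, h23'.2]
  have e0 : ((v' 0)⁻¹ • v' + (v 1)⁻¹ • v) 0 = 1 := by
    simp [hv0, inv_mul_cancel₀ hv'0]
  have e1 : ((v' 0)⁻¹ • v' + (v 1)⁻¹ • v) 1 = 1 := by
    simp [hv'1, inv_mul_cancel₀ hv1]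
  unfold Qf at hz
  rw [e0, e1, e2, e3, one_mul] at hz
  have hzz : ![(0:F), 0] = 0 := by funext i; fin_cases i <;> rfl
  rw [hzz, QuadraticMap.map_zero, add_zero] at hz
  exact one_ne_zero hz

end Aux2

section Aux3
variable {F : Type} [Field F]

/-- Parametrization of the points of the elliptic quadric. -/
private def pt (g : QuadraticForm F (Fin 2 → F)) :
    Option (Fin 2 → F) → Projectivization F (Fin 4 → F)
  | none => Projectivization.mk F ![0, 1, 0, 0]
      (fun h => one_ne_zero (α := F) (by simpa using congrFun h 1))
  | some w => Projectivization.mk F ![1, -g w, w 0, w 1]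
      (fun h => one_ne_zero (α := F) (by simpa using congrFun h 0))

private lemma pt_injective (g : QuadraticForm F (Fin 2 → F)) :
    Function.Injective (pt g) := by
  intro o o' h
  match o, o' with
  | none, none => rfl
  | none, some w =>
    exfalso
    rw [pt, pt, Projectivization.mk_eq_mk_iff] at h
    obtain ⟨a, ha⟩ := h
    have h0 := congrFun ha 0
    simp [Units.smul_def] at h0
  | some w, none =>
    exfalso
    rw [pt, pt, Projectivization.mk_eq_mk_iff] at h
    obtain ⟨a, ha⟩ := h
    have h0 := congrFun ha 0
    simp [Units.smul_def] at h0
  | some w, some w' =>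
    rw [pt, pt, Projectivization.mk_eq_mk_iff] at h
    obtain ⟨a, ha⟩ := h
    have h0 := congrFun ha 0
    simp [Units.smul_def] at h0
    have h2 := congrFun ha 2
    have h3 := congrFun ha 3
    simp [Units.smul_def, h0] at h2 h3
    congr 1
    funext i
    fin_cases i
    · exact h2.symm
    · exact h3.symm

end Aux3

section Aux4
variable {F : Type} [Field F]

private lemma pt_range (g : QuadraticForm F (Fin 2 → F)) (hg : ∀ w, g w = 0 → w = 0) :
    {p : Projectivization F (Fin 4 → F) | ∃ (v : Fin 4 → F) (hv : v ≠ 0),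
      p = Projectivization.mk F v hv ∧ v 0 * v 1 + g ![v 2, v 3] = 0} = Set.range (pt g) := by
  ext p
  constructor
  · rintro ⟨v, hv, rfl, hQ⟩
    by_cases h0 : v 0 = 0
    · refine ⟨none, ?_⟩
      have hgz : g ![v 2, v 3] = 0 := by rw [h0, zero_mul, zero_add] at hQ; exact hQ
      have h23 := hg _ hgz
      have h2 : v 2 = 0 := by simpa using congrFun h23 0
      have h3 : v 3 = 0 := by simpa using congrFun h23 1
      have hv1 : v 1 ≠ 0 := by
        intro h1
        apply hv
        funext i
        fin_cases i <;> simp only [Pi.zero_apply]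
        exacts [h0, h1, h2, h3]
      rw [pt, Projectivization.mk_eq_mk_iff]
      refine ⟨Units.mk0 (v 1)⁻¹ (inv_ne_zero hv1), ?_⟩
      funext i
      fin_cases i <;>
        simp [Units.smul_def, h0, h2, h3, inv_mul_cancel₀ hv1]
    · refine ⟨some ![(v 0)⁻¹ * v 2, (v 0)⁻¹ * v 3], ?_⟩
      have hw : ![(v 0)⁻¹ * v 2, (v 0)⁻¹ * v 3] = (v 0)⁻¹ • ![v 2, v 3] := by
        funext i; fin_cases i <;> simp
      have hgv : g ![v 2, v 3] = -(v 0 * v 1) := eq_neg_of_add_eq_zero_right hQ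
      have hgw : g ![(v 0)⁻¹ * v 2, (v 0)⁻¹ * v 3] = -((v 0)⁻¹ * v 1) := by
        rw [hw, QuadraticMap.map_smul, smul_eq_mul, hgv]
        field_simp
      rw [pt, Projectivization.mk_eq_mk_iff]
      refine ⟨Units.mk0 (v 0)⁻¹ (inv_ne_zero h0), ?_⟩
      funext i
      fin_cases i <;>
        simp [Units.smul_def, hgw, inv_mul_cancel₀ h0]
  · rintro ⟨o, rfl⟩
    match o with
    | none =>
      refine ⟨![0, 1, 0, 0], _, rfl, ?_⟩
      have hzz : ![(0:F), 0] = 0 := by funext i; fin_cases i <;> rfl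
      simp [hzz]
    | some w =>
      refine ⟨![1, -g w, w 0, w 1], _, rfl, ?_⟩
      have hww : ![w 0, w 1] = w := by funext i; fin_cases i <;> rfl
      show (1:F) * (-g w) + g ![w 0, w 1] = 0
      rw [hww]
      ring

end Aux4

/-- No three points of the set `A ⊆ PG(3,q)` are collinear, where three points are
collinear if their representative vectors span a subspace of dimension at most 2. -/
def NoThreeCollinear (F : Type) [Field F] (A : Set (Projectivization F (Fin 4 → F))) : Prop :=
  ∀ p₁ ∈ A, ∀ p₂ ∈ A, ∀ p₃ ∈ A, p₁ ≠ p₂ → p₁ ≠ p₃ → p₂ ≠ p₃ →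
    ¬ (Module.finrank F ↥(p₁.submodule ⊔ p₂.submodule ⊔ p₃.submodule) ≤ 2)

/-- Let `g` be an anisotropic quadratic form on `F_q²` and let
`Q(x₀,x₁,x₂,x₃) = x₀x₁ + g(x₂,x₃)`.  Then the projective zero set of `Q` is a
`(q²+1)`-cap of `PG(3,q)`: it has exactly `q² + 1` points, no three collinear. -/
theorem elliptic_quadric_is_cap (q : ℕ) (F : Type) [Field F] [Fintype F]
    (hq : Fintype.card F = q)
    (g : QuadraticForm F (Fin 2 → F)) (hg : ∀ w, g w = 0 → w = 0)
    (S : Set (Projectivization F (Fin 4 → F)))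
    (hS : S = {p | ∃ (v : Fin 4 → F) (hv : v ≠ 0),
      p = Projectivization.mk F v hv ∧ v 0 * v 1 + g ![v 2, v 3] = 0}) :
    S.ncard = q ^ 2 + 1 ∧ NoThreeCollinear F S := by
  subst hq
  subst hS
  constructor
  · -- counting
    classical
    rw [pt_range g hg, ← Nat.card_coe_set_eq, Nat.card_range_of_injective (pt_injective g),
      Nat.card_eq_fintype_card, Fintype.card_option, Fintype.card_fun]
    simp
  · -- no three collinear
    intro p₁ h₁ p₂ h₂ p₃ h₃ h12 h13 h23 hle
    obtain ⟨v₁, hv₁, rfl, hQ₁⟩ := h₁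
    obtain ⟨v₂, hv₂, rfl, hQ₂⟩ := h₂
    obtain ⟨v₃, hv₃, rfl, hQ₃⟩ := h₃
    -- v₁, v₂ are independent
    have hind : ∀ s t : F, s • v₁ + t • v₂ = 0 → s = 0 ∧ t = 0 := by
      intro s t h
      by_cases hs : s = 0
      · subst hs
        rw [zero_smul, zero_add] at h
        rcases smul_eq_zero.1 h with ht | hzero
        · exact ⟨rfl, ht⟩
        · exact absurd hzero hv₂
      · exfalso
        apply h12
        rw [Projectivization.mk_eq_mk_iff]
        have hv₁eq : v₁ = (-(s⁻¹ * t)) • v₂ := by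
          have h' : s • v₁ = -(t • v₂) := eq_neg_of_add_eq_zero_left h
          calc v₁ = s⁻¹ • (s • v₁) := by rw [smul_smul, inv_mul_cancel₀ hs, one_smul]
            _ = s⁻¹ • (-(t • v₂)) := by rw [h']
            _ = (-(s⁻¹ * t)) • v₂ := by rw [smul_neg, smul_smul, neg_smul]
        have hc : -(s⁻¹ * t) ≠ 0 := by
          intro h0
          rw [h0, zero_smul] at hv₁eq
          exact hv₁ hv₁eq
        exact ⟨Units.mk0 _ hc, by rw [Units.smul_def]; exact hv₁eq.symm⟩
    have hli : LinearIndependent F ![v₁, v₂] := LinearIndependent.pair_iff.mpr hind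
    -- the span of v₁, v₂ equals the whole subspace
    set W := (Projectivization.mk F v₁ hv₁).submodule ⊔ (Projectivization.mk F v₂ hv₂).submodule
      ⊔ (Projectivization.mk F v₃ hv₃).submodule with hWdef
    have hsub : Submodule.span F {v₁, v₂} ≤ W := by
      rw [Submodule.span_le]
      rintro x (rfl | rfl)
      · apply SetLike.le_def.mp (le_trans le_sup_left le_sup_left)
        rw [Projectivization.submodule_mk]
        exact Submodule.mem_span_singleton_self _
      · apply SetLike.le_def.mp (le_trans le_sup_right le_sup_left)
        rw [Projectivization.submodule_mk]
        exact Submodule.mem_span_singleton_self _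
    have hfr : Module.finrank F (Submodule.span F {v₁, v₂}) = 2 := by
      have h := finrank_span_eq_card hli
      have hr : Set.range ![v₁, v₂] = {v₁, v₂} := by
        simp only [Matrix.range_cons, Matrix.range_empty, Set.union_empty,
          Set.union_singleton]
        exact Set.pair_comm v₂ v₁
      rw [hr] at h
      simpa using h
    have hWeq : Submodule.span F {v₁, v₂} = W :=
      Submodule.eq_of_le_of_finrank_le hsub (by rw [hfr]; exact hle)
    have hv₃mem : v₃ ∈ Submodule.span F {v₁, v₂} := by
      rw [hWeq]
      apply SetLike.le_def.mp le_sup_right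
      rw [Projectivization.submodule_mk]
      exact Submodule.mem_span_singleton_self v₃
    obtain ⟨a, b, hab⟩ := Submodule.mem_span_pair.1 hv₃mem
    have hQf₁ : Qf g v₁ = 0 := hQ₁
    have hQf₂ : Qf g v₂ = 0 := hQ₂
    have hQf₃ : Qf g v₃ = 0 := hQ₃
    have ha : a ≠ 0 := by
      intro h
      subst h
      rw [zero_smul, zero_add] at hab
      have hb : b ≠ 0 := fun h0 => hv₃ (by rw [← hab, h0, zero_smul])
      apply h23
      rw [Projectivization.mk_eq_mk_iff]
      refine ⟨(Units.mk0 b hb)⁻¹, ?_⟩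
      rw [Units.smul_def, ← hab, smul_smul]
      simp [inv_mul_cancel₀ hb]
    have hb : b ≠ 0 := by
      intro h
      subst h
      rw [zero_smul, add_zero] at hab
      have ha' : a ≠ 0 := fun h0 => hv₃ (by rw [← hab, h0, zero_smul])
      apply h13
      rw [Projectivization.mk_eq_mk_iff]
      refine ⟨(Units.mk0 a ha')⁻¹, ?_⟩
      rw [Units.smul_def, ← hab, smul_smul]
      simp [inv_mul_cancel₀ ha']
    -- the polar term vanishes
    have hexp := Qf_comb g a b v₁ v₂
    rw [hab, hQf₁, hQf₂, hQf₃] at hexp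
    have hB : v₁ 0 * v₂ 1 + v₁ 1 * v₂ 0 + QuadraticMap.polar g ![v₁ 2, v₁ 3] ![v₂ 2, v₂ 3] = 0 := by
      have h' : a * b * (v₁ 0 * v₂ 1 + v₁ 1 * v₂ 0 +
          QuadraticMap.polar g ![v₁ 2, v₁ 3] ![v₂ 2, v₂ 3]) = 0 := by
        calc a * b * (v₁ 0 * v₂ 1 + v₁ 1 * v₂ 0 +
              QuadraticMap.polar g ![v₁ 2, v₁ 3] ![v₂ 2, v₂ 3])
            = a * a * 0 + b * b * 0 + a * b * (v₁ 0 * v₂ 1 + v₁ 1 * v₂ 0 +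
              QuadraticMap.polar g ![v₁ 2, v₁ 3] ![v₂ 2, v₂ 3]) := by ring
          _ = 0 := hexp.symm
      rcases mul_eq_zero.1 h' with h'' | h''
      · exact absurd h'' (mul_ne_zero ha hb)
      · exact h''
    exact no_plane g hg v₁ v₂ hind (fun s t => by rw [Qf_comb, hQf₁, hQf₂, hB]; ring)
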